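/- For all 2 ≤ i ≤ l and m1,n1,m2,n2 ∈ Z, the operators e_{1i}(m1,n1) and e_{1i}(m2,n2) on V commute: [e_{1i}(m1,n1), e_{1i}(m2,n2)] = 0. -/

import Mathlib

open MvPolynomial

/-- Index set `{2, …, l}` for the variables. -/
abbrev Idx (l : ℕ) := {i : ℕ // 2 ≤ i ∧ i ≤ l}

/-- The polynomial ring `V = ℂ[x_i(m,n) : 2 ≤ i ≤ l, (m,n) ∈ ℤ²]`. -/
abbrev V (l : ℕ) := MvPolynomial (Idx l × ℤ × ℤ) ℂ

/-- `e_{ij}(m1,n1) = Σ_{(m,n)} q^{m n1} x_i(m1+m, n1+n) ∂/∂x_j(m,n)`, for `2 ≤ i,j ≤ l`. -/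
noncomputable def eGen (l : ℕ) (q : ℂ) (i j : Idx l) (m1 n1 : ℤ) (p : V l) : V l :=
  ∑ᶠ mn : ℤ × ℤ,
    q ^ (mn.1 * n1) • (X (i, m1 + mn.1, n1 + mn.2) * pderiv (j, mn.1, mn.2) p)

/-- `e_{i1}(m,n)` = multiplication by the variable `x_i(m,n)`. -/
noncomputable def eLow (l : ℕ) (i : Idx l) (m n : ℤ) (p : V l) : V l :=
  X (i, m, n) * p

/-- `e_{11}(m1,n1) = μ δ_{(m1,n1),(0,0)} − Σ_{j=2}^l Σ_{(m,n)} q^{n m1} x_j(m1+m, n1+n) ∂/∂x_j(m,n)`. -/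
noncomputable def e11 (l : ℕ) (q μ : ℂ) (m1 n1 : ℤ) (p : V l) : V l :=
  (if (m1, n1) = ((0 : ℤ), (0 : ℤ)) then μ else 0) • p
  - ∑ᶠ j : Idx l, ∑ᶠ mn : ℤ × ℤ,
      q ^ (mn.2 * m1) • (X (j, m1 + mn.1, n1 + mn.2) * pderiv (j, mn.1, mn.2) p)

/-- `e_{1i}(m1,n1) = q^{−m1 n1} μ ∂/∂x_i(−m1,−n1)
  − Σ_{j=2}^l Σ_{(m,n),(m',n')} q^{n1 m' + n m1 + n m'}
      x_j(m1+m+m', n1+n+n') ∂/∂x_j(m,n) ∂/∂x_i(m',n')`, for `2 ≤ i ≤ l`. -/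
noncomputable def eUp (l : ℕ) (q μ : ℂ) (i : Idx l) (m1 n1 : ℤ) (p : V l) : V l :=
  q ^ (-(m1 * n1)) • μ • pderiv (i, -m1, -n1) p
  - ∑ᶠ j : Idx l, ∑ᶠ mm : (ℤ × ℤ) × (ℤ × ℤ),
      q ^ (n1 * mm.2.1 + mm.1.2 * m1 + mm.1.2 * mm.2.1) •
        (X (j, m1 + mm.1.1 + mm.2.1, n1 + mm.1.2 + mm.2.2) *
          pderiv (j, mm.1.1, mm.1.2) (pderiv (i, mm.2.1, mm.2.2) p))

/-- Degree operator `D1 = Σ_{i=2}^l Σ_{(m,n)} m · x_i(m,n) ∂/∂x_i(m,n)`. -/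
noncomputable def D1 (l : ℕ) (p : V l) : V l :=
  ∑ᶠ i : Idx l, ∑ᶠ mn : ℤ × ℤ,
    (mn.1 : ℂ) • (X (i, mn.1, mn.2) * pderiv (i, mn.1, mn.2) p)

/-- Degree operator `D2 = Σ_{i=2}^l Σ_{(m,n)} n · x_i(m,n) ∂/∂x_i(m,n)`. -/
noncomputable def D2 (l : ℕ) (p : V l) : V l :=
  ∑ᶠ i : Idx l, ∑ᶠ mn : ℤ × ℤ,
    (mn.2 : ℂ) • (X (i, mn.1, mn.2) * pderiv (i, mn.1, mn.2) p)

/-- Commutator `[A,B] = A∘B − B∘A` of operators on `V`. -/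
noncomputable def oComm {l : ℕ} (A B : V l → V l) : V l → V l := fun p => A (B p) - B (A p)

namespace S7
variable {l : ℕ}

instance : Finite (Idx l) :=
  Finite.of_injective (fun x => (⟨x.1, Nat.lt_succ_of_le x.2.2⟩ : Fin (l+1)))
    (fun a b h => Subtype.ext (by simpa [Fin.ext_iff] using h))

noncomputable instance : Fintype (Idx l) := Fintype.ofFinite _

theorem pd_sum {σ : Type*} {β : Type*} (v : σ) (t : Finset β) (f : β → MvPolynomial σ ℂ) :
    pderiv v (∑ x ∈ t, f x) = ∑ x ∈ t, pderiv v (f x) := by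
  classical
  induction t using Finset.induction_on with
  | empty => simp
  | insert _ _ h ih => rw [Finset.sum_insert h, Finset.sum_insert h, Derivation.map_add, ih]

theorem pdc {σ : Type*} (a b : σ) (p : MvPolynomial σ ℂ) :
    pderiv a (pderiv b p) = pderiv b (pderiv a p) := by
  classical
  induction p using MvPolynomial.induction_on' with
  | add p q hp hq => simp [hp, hq]
  | monomial s c =>
    simp only [pderiv_monomial]
    rcases eq_or_ne a b with rfl | hab
    · rfl
    · rw [tsub_right_comm]
      congr 1
      rw [Finsupp.tsub_apply, Finsupp.tsub_apply, Finsupp.single_eq_of_ne hab,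
        Finsupp.single_eq_of_ne (Ne.symm hab)]
      simp only [tsub_zero]
      ring

theorem vars_pd {σ : Type*} (v : σ) (p : MvPolynomial σ ℂ) : (pderiv v p).vars ⊆ p.vars := by
  classical
  intro x hx
  have h : pderiv v p = ∑ s ∈ p.support, monomial (s - Finsupp.single v 1) (coeff s p * s v) := by
    conv_lhs => rw [p.as_sum]
    rw [pd_sum]
    exact Finset.sum_congr rfl fun s _ => pderiv_monomial
  rw [h] at hx
  obtain ⟨s, hs, hxs⟩ := Finset.mem_biUnion.1 (vars_sum_subset _ _ hx)
  by_cases h0 : coeff s p * s v = 0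
  · simp [h0] at hxs
  · rw [vars_monomial h0] at hxs
    exact (mem_vars x).2 ⟨s, hs, Finsupp.support_tsub hxs⟩


/-- projection of variables to ℤ² -/
noncomputable def pv (p : V l) : Finset (ℤ × ℤ) := p.vars.image Prod.snd

theorem pd_zero {p : V l} {j : Idx l} {ab : ℤ × ℤ} (h : ab ∉ pv p) :
    pderiv (j, ab) p = 0 :=
  pderiv_eq_zero_of_notMem_vars (fun hmem => h (Finset.mem_image_of_mem Prod.snd hmem))

theorem pv_pd (v : Idx l × ℤ × ℤ) (p : V l) : pv (pderiv v p) ⊆ pv p :=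
  Finset.image_subset_image (vars_pd v p)

noncomputable def w (q : ℂ) (m1 n1 : ℤ) (mm : (ℤ × ℤ) × (ℤ × ℤ)) : ℂ :=
  q ^ (n1 * mm.2.1 + mm.1.2 * m1 + mm.1.2 * mm.2.1)

noncomputable def trm (q : ℂ) (i : Idx l) (m1 n1 : ℤ) (p : V l) (j : Idx l)
    (mm : (ℤ × ℤ) × (ℤ × ℤ)) : V l :=
  w q m1 n1 mm • (X (j, m1 + mm.1.1 + mm.2.1, n1 + mm.1.2 + mm.2.2) *
    pderiv (j, mm.1) (pderiv (i, mm.2) p))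

noncomputable def SS (q : ℂ) (i : Idx l) (m1 n1 : ℤ) (p : V l) : V l :=
  ∑ᶠ j : Idx l, ∑ᶠ mm : (ℤ × ℤ) × (ℤ × ℤ), trm q i m1 n1 p j mm

theorem eUp_eq (q μ : ℂ) (i : Idx l) (m1 n1 : ℤ) (p : V l) :
    eUp l q μ i m1 n1 p
      = q ^ (-(m1 * n1)) • μ • pderiv (i, (-m1, -n1)) p - SS q i m1 n1 p := rfl

theorem trm_support (q : ℂ) (i : Idx l) (m1 n1 : ℤ) (p : V l) (j : Idx l) :
    Function.support (trm q i m1 n1 p j) ⊆ ↑(pv p ×ˢ pv p) := by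
  intro mm hmm
  simp only [Function.mem_support] at hmm
  simp only [Finset.coe_product, Set.mem_prod, Finset.mem_coe]
  constructor
  · by_contra h
    exact hmm (by rw [trm, pd_zero (fun hh => h (pv_pd _ _ hh)), mul_zero, smul_zero])
  · by_contra h
    exact hmm (by rw [trm, pd_zero h, Derivation.map_zero, mul_zero, smul_zero])

theorem SS_eq_sum (q : ℂ) (i : Idx l) (m1 n1 : ℤ) (p : V l) {s : Finset (ℤ × ℤ)}
    (hs : pv p ⊆ s) :
    SS q i m1 n1 p = ∑ j : Idx l, ∑ mm ∈ s ×ˢ s, trm q i m1 n1 p j mm := by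
  rw [SS, finsum_eq_sum_of_fintype]
  refine Finset.sum_congr rfl fun j _ => ?_
  exact finsum_eq_sum_of_support_subset _
    ((trm_support q i m1 n1 p j).trans
      (Finset.coe_subset.2 (Finset.product_subset_product hs hs)))

theorem pv_add (p p' : V l) : pv (p + p') ⊆ pv p ∪ pv p' := by
  classical
  intro x hx
  obtain ⟨vv, hvv, rfl⟩ := Finset.mem_image.1 hx
  rcases Finset.mem_union.1 (vars_add_subset p p' hvv) with h | h
  · exact Finset.mem_union_left _ (Finset.mem_image_of_mem _ h)
  · exact Finset.mem_union_right _ (Finset.mem_image_of_mem _ h)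

theorem pv_smul (a : ℂ) (p : V l) : pv (a • p) ⊆ pv p := by
  classical
  refine Finset.image_subset_image ?_
  rw [smul_eq_C_mul]
  refine (vars_mul _ _).trans ?_
  simp [vars_C]

theorem trm_add (q : ℂ) (i : Idx l) (m1 n1 : ℤ) (p p' : V l) (j : Idx l)
    (mm : (ℤ × ℤ) × (ℤ × ℤ)) :
    trm q i m1 n1 (p + p') j mm = trm q i m1 n1 p j mm + trm q i m1 n1 p' j mm := by
  simp only [trm, Derivation.map_add, mul_add, smul_add]

theorem trm_smul (q : ℂ) (i : Idx l) (m1 n1 : ℤ) (a : ℂ) (p : V l) (j : Idx l)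
    (mm : (ℤ × ℤ) × (ℤ × ℤ)) :
    trm q i m1 n1 (a • p) j mm = a • trm q i m1 n1 p j mm := by
  simp only [trm, Derivation.map_smul, mul_smul_comm]
  rw [smul_comm]

theorem SS_add (q : ℂ) (i : Idx l) (m1 n1 : ℤ) (p p' : V l) :
    SS q i m1 n1 (p + p') = SS q i m1 n1 p + SS q i m1 n1 p' := by
  rw [SS_eq_sum q i m1 n1 _ (pv_add p p'),
    SS_eq_sum q i m1 n1 p (Finset.subset_union_left (s₂ := pv p')),
    SS_eq_sum q i m1 n1 p' (Finset.subset_union_right (s₁ := pv p)), ← Finset.sum_add_distrib]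
  refine Finset.sum_congr rfl fun j _ => ?_
  rw [← Finset.sum_add_distrib]
  exact Finset.sum_congr rfl fun mm _ => trm_add q i m1 n1 p p' j mm

theorem SS_smul (q : ℂ) (i : Idx l) (m1 n1 : ℤ) (a : ℂ) (p : V l) :
    SS q i m1 n1 (a • p) = a • SS q i m1 n1 p := by
  rw [SS_eq_sum q i m1 n1 _ (pv_smul a p), SS_eq_sum q i m1 n1 p subset_rfl, Finset.smul_sum]
  refine Finset.sum_congr rfl fun j _ => ?_
  rw [Finset.smul_sum]
  exact Finset.sum_congr rfl fun mm _ => trm_smul q i m1 n1 a p j mm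

theorem SS_sub (q : ℂ) (i : Idx l) (m1 n1 : ℤ) (p p' : V l) :
    SS q i m1 n1 (p - p') = SS q i m1 n1 p - SS q i m1 n1 p' := by
  rw [sub_eq_add_neg, SS_add, ← neg_one_smul ℂ p', SS_smul, neg_one_smul, ← sub_eq_add_neg]

theorem SS_zero (q : ℂ) (i : Idx l) (m1 n1 : ℤ) : SS q i m1 n1 (0 : V l) = 0 := by
  have := SS_smul q i m1 n1 0 (0 : V l)
  simpa using this

theorem SS_sum (q : ℂ) (i : Idx l) (m1 n1 : ℤ) {β : Type*} (t : Finset β) (f : β → V l) :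
    SS q i m1 n1 (∑ x ∈ t, f x) = ∑ x ∈ t, SS q i m1 n1 (f x) := by
  classical
  induction t using Finset.induction_on with
  | empty => simp [SS_zero]
  | insert _ _ h ih => rw [Finset.sum_insert h, Finset.sum_insert h, SS_add, ih]


theorem pdX (v u : Idx l × ℤ × ℤ) : pderiv v (X u : V l) = if v = u then 1 else 0 := by
  split_ifs with h
  · subst h; exact pderiv_X_self v
  · exact pderiv_X_of_ne (Ne.symm h)

theorem DD_X_mul (i j k : Idx l) (ab cd u2 : ℤ × ℤ) (v : V l) :
    pderiv (j, ab) (pderiv (i, cd) (X (k, u2) * v))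
      = X (k, u2) * pderiv (j, ab) (pderiv (i, cd) v)
        + ((if ((i, cd) : Idx l × ℤ × ℤ) = (k, u2) then 1 else 0) * pderiv (j, ab) v
          + (if ((j, ab) : Idx l × ℤ × ℤ) = (k, u2) then 1 else 0) * pderiv (i, cd) v) := by
  classical
  by_cases h1 : ((i, cd) : Idx l × ℤ × ℤ) = (k, u2) <;>
    by_cases h2 : ((j, ab) : Idx l × ℤ × ℤ) = (k, u2) <;>
      simp only [pderiv_mul, pdX, h1, h2, if_true, if_false, one_mul, zero_mul, Derivation.map_add,
        Derivation.map_zero, zero_add, add_zero, mul_zero, zero_mul, if_pos, if_neg] <;>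
      ring



theorem SS_X_mul (q : ℂ) (i k : Idx l) (m1 n1 : ℤ) (u2 : ℤ × ℤ) (v : V l)
    {s : Finset (ℤ × ℤ)} (hs : pv v ⊆ s) :
    SS q i m1 n1 (X (k, u2) * v)
      = (∑ j : Idx l, ∑ mm ∈ s ×ˢ s, w q m1 n1 mm •
          (X (j, m1 + mm.1.1 + mm.2.1, n1 + mm.1.2 + mm.2.2) *
            (X (k, u2) * pderiv (j, mm.1) (pderiv (i, mm.2) v))))
        + ((if k = i then ∑ j : Idx l, ∑ ab ∈ s, w q m1 n1 (ab, u2) •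
              (X (j, m1 + ab.1 + u2.1, n1 + ab.2 + u2.2) * pderiv (j, ab) v) else 0)
          + ∑ cd ∈ s, w q m1 n1 (u2, cd) •
              (X (k, m1 + u2.1 + cd.1, n1 + u2.2 + cd.2) * pderiv (i, cd) v)) := by
  classical
  have hsub : pv (X (k, u2) * v) ⊆ insert u2 s := by
    intro x hx
    obtain ⟨vv, hvv, rfl⟩ := Finset.mem_image.1 hx
    rcases Finset.mem_union.1 (vars_mul _ _ hvv) with h | h
    · rw [vars_X, Finset.mem_singleton] at h
      subst h
      exact Finset.mem_insert_self _ _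
    · exact Finset.mem_insert_of_mem (hs (Finset.mem_image_of_mem _ h))
  rw [SS_eq_sum q i m1 n1 _ hsub]
  have expand : ∀ j : Idx l, ∀ mm : (ℤ × ℤ) × (ℤ × ℤ),
      trm q i m1 n1 (X (k, u2) * v) j mm
        = w q m1 n1 mm • (X (j, m1 + mm.1.1 + mm.2.1, n1 + mm.1.2 + mm.2.2) *
            (X (k, u2) * pderiv (j, mm.1) (pderiv (i, mm.2) v)))
          + (w q m1 n1 mm • (X (j, m1 + mm.1.1 + mm.2.1, n1 + mm.1.2 + mm.2.2) *
              ((if ((i, mm.2) : Idx l × ℤ × ℤ) = (k, u2) then 1 else 0) * pderiv (j, mm.1) v))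
            + w q m1 n1 mm • (X (j, m1 + mm.1.1 + mm.2.1, n1 + mm.1.2 + mm.2.2) *
              ((if ((j, mm.1) : Idx l × ℤ × ℤ) = (k, u2) then 1 else 0) * pderiv (i, mm.2) v))) := by
    intro j mm
    rw [trm, DD_X_mul, mul_add, mul_add, smul_add, smul_add]
  simp only [expand, Finset.sum_add_distrib]
  refine congrArg₂ (· + ·) ?_ (congrArg₂ (· + ·) ?_ ?_)
  · -- main block: shrink insert u2 s to s
    refine Finset.sum_congr rfl fun j _ => ?_
    refine (Finset.sum_subset
      (Finset.product_subset_product (Finset.subset_insert _ _) (Finset.subset_insert _ _))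
      fun mm hmm hns => ?_).symm
    by_cases h2 : mm.2 ∈ s
    · have h1 : mm.1 ∉ s := by
        intro h1
        exact hns (Finset.mem_product.2 ⟨h1, h2⟩)
      rw [pd_zero (fun hh => h1 (hs (pv_pd _ _ hh))), mul_zero, mul_zero, smul_zero]
    · rw [pd_zero (fun hh => h2 (hs hh)), Derivation.map_zero, mul_zero, mul_zero, smul_zero]
  · -- delta on (i, mm.2)
    rcases eq_or_ne k i with rfl | hk
    · rw [if_pos rfl]
      refine Finset.sum_congr rfl fun j _ => ?_
      rw [Finset.sum_product]
      calc ∑ a ∈ insert u2 s, ∑ b ∈ insert u2 s,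
            w q m1 n1 (a, b) • (X (j, m1 + a.1 + b.1, n1 + a.2 + b.2) *
              ((if ((k, b) : Idx l × ℤ × ℤ) = (k, u2) then 1 else 0) * pderiv (j, a) v))
          = ∑ a ∈ insert u2 s, w q m1 n1 (a, u2) •
              (X (j, m1 + a.1 + u2.1, n1 + a.2 + u2.2) * pderiv (j, a) v) := by
            refine Finset.sum_congr rfl fun a _ => ?_
            refine (Finset.sum_eq_single_of_mem u2 (Finset.mem_insert_self _ _)
              fun b _ hb => ?_).trans ?_
            · rw [if_neg (by simp [Prod.mk.injEq, hb]), zero_mul, mul_zero, smul_zero]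
            · rw [if_pos rfl, one_mul]
        _ = ∑ a ∈ s, w q m1 n1 (a, u2) •
              (X (j, m1 + a.1 + u2.1, n1 + a.2 + u2.2) * pderiv (j, a) v) := by
            refine (Finset.sum_subset (Finset.subset_insert _ _) fun a _ ha => ?_).symm
            rw [pd_zero (fun hh => ha (hs hh)), mul_zero, smul_zero]
    · rw [if_neg hk]
      refine Finset.sum_eq_zero fun j _ => Finset.sum_eq_zero fun mm _ => ?_
      rw [if_neg (fun h => hk (congrArg Prod.fst h).symm), zero_mul, mul_zero, smul_zero]
  · -- delta on (j, mm.1)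
    rw [Finset.sum_eq_single_of_mem k (Finset.mem_univ k)
      (fun j _ hj => Finset.sum_eq_zero fun mm _ => by
        rw [if_neg (fun h => hj (congrArg Prod.fst h)), zero_mul, mul_zero, smul_zero])]
    rw [Finset.sum_product]
    calc ∑ a ∈ insert u2 s, ∑ b ∈ insert u2 s,
          w q m1 n1 (a, b) • (X (k, m1 + a.1 + b.1, n1 + a.2 + b.2) *
            ((if ((k, a) : Idx l × ℤ × ℤ) = (k, u2) then 1 else 0) * pderiv (i, b) v))
        = ∑ b ∈ insert u2 s, w q m1 n1 (u2, b) •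
            (X (k, m1 + u2.1 + b.1, n1 + u2.2 + b.2) * pderiv (i, b) v) := by
          refine (Finset.sum_eq_single_of_mem u2 (Finset.mem_insert_self _ _)
            fun a _ ha => Finset.sum_eq_zero fun b _ => ?_).trans ?_
          · rw [if_neg (by simp [Prod.mk.injEq, ha]), zero_mul, mul_zero, smul_zero]
          · refine Finset.sum_congr rfl fun b _ => ?_
            rw [if_pos rfl, one_mul]
      _ = ∑ b ∈ s, w q m1 n1 (u2, b) •
            (X (k, m1 + u2.1 + b.1, n1 + u2.2 + b.2) * pderiv (i, b) v) := by
          refine (Finset.sum_subset (Finset.subset_insert _ _) fun b _ hb => ?_).symm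
          rw [pd_zero (fun hh => hb (hs hh)), mul_zero, smul_zero]


theorem pd_SS_comm (q : ℂ) (i : Idx l) (m n : ℤ) (u : Idx l × ℤ × ℤ) (p : V l) :
    pderiv u (SS q i m n p) - SS q i m n (pderiv u p)
      = ∑ j : Idx l, ∑ mm ∈ pv p ×ˢ pv p, w q m n mm •
          ((if u = (j, m + mm.1.1 + mm.2.1, n + mm.1.2 + mm.2.2) then 1 else 0) *
            pderiv (j, mm.1) (pderiv (i, mm.2) p)) := by
  rw [SS_eq_sum q i m n p subset_rfl, SS_eq_sum q i m n (pderiv u p) (pv_pd _ _), pd_sum,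
    ← Finset.sum_sub_distrib]
  refine Finset.sum_congr rfl fun j _ => ?_
  rw [pd_sum, ← Finset.sum_sub_distrib]
  refine Finset.sum_congr rfl fun mm _ => ?_
  rw [trm, trm, Derivation.map_smul, pderiv_mul, pdX,
    pdc u (j, mm.1) (pderiv (i, mm.2) p), pdc u (i, mm.2) p, smul_add]
  exact add_sub_cancel_right _ _

theorem Dcomm (q : ℂ) (hq : q ≠ 0) (i : Idx l) (m1 n1 m2 n2 : ℤ) (p : V l) :
    (q ^ (-(m1 * n1)) : ℂ) • (pderiv ((i, (-m1, -n1)) : Idx l × ℤ × ℤ) (SS q i m2 n2 p)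
        - SS q i m2 n2 (pderiv (i, (-m1, -n1)) p))
      = (q ^ (-(m2 * n2)) : ℂ) • (pderiv ((i, (-m2, -n2)) : Idx l × ℤ × ℤ) (SS q i m1 n1 p)
        - SS q i m1 n1 (pderiv (i, (-m2, -n2)) p)) := by
  rw [pd_SS_comm, pd_SS_comm, Finset.smul_sum, Finset.smul_sum]
  refine Finset.sum_congr rfl fun j _ => ?_
  rw [Finset.smul_sum, Finset.smul_sum]
  refine Finset.sum_nbij' (fun mm => Prod.swap mm) (fun mm => Prod.swap mm)
    (fun mm hmm => ?_) (fun mm hmm => ?_) (fun mm _ => rfl) (fun mm _ => rfl)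
    (fun mm hmm => ?_)
  · rw [Finset.mem_product] at hmm ⊢; exact ⟨hmm.2, hmm.1⟩
  · rw [Finset.mem_product] at hmm ⊢; exact ⟨hmm.2, hmm.1⟩
  · by_cases hcond : ((i, (-m1, -n1)) : Idx l × ℤ × ℤ)
        = (j, m2 + mm.1.1 + mm.2.1, n2 + mm.1.2 + mm.2.2)
    · have hj : j = i := (congrArg Prod.fst hcond).symm
      subst hj
      have h1 : m2 + mm.1.1 + mm.2.1 = -m1 := by
        have := congrArg (fun x => x.2.1) hcond; simpa using this.symm
      have h2 : n2 + mm.1.2 + mm.2.2 = -n1 := by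
        have := congrArg (fun x => x.2.2) hcond; simpa using this.symm
      rw [if_pos hcond, if_pos (show ((j, (-m2, -n2)) : Idx l × ℤ × ℤ)
          = (j, m1 + mm.swap.1.1 + mm.swap.2.1, n1 + mm.swap.1.2 + mm.swap.2.2) by
        simp only [Prod.swap, Prod.mk.injEq]
        refine ⟨trivial, by omega, by omega⟩)]
      rw [one_mul, one_mul, smul_smul, smul_smul, pdc (j, mm.1) (j, mm.2) p]
      congr 1
      rw [w, w, ← zpow_add₀ hq, ← zpow_add₀ hq]
      congr 1
      simp only [Prod.swap]
      linear_combination (n2 + mm.1.2) * h1 - (m1 + mm.1.1) * h2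
    · rw [if_neg hcond, if_neg (fun hc2 => ?_), zero_mul, zero_mul, smul_zero, smul_zero,
        smul_zero, smul_zero]
      apply hcond
      have hj : i = j := congrArg Prod.fst hc2
      have h1 : -m2 = m1 + mm.swap.1.1 + mm.swap.2.1 := congrArg (fun x => x.2.1) hc2
      have h2 : -n2 = n1 + mm.swap.1.2 + mm.swap.2.2 := congrArg (fun x => x.2.2) hc2
      simp only [Prod.swap] at h1 h2
      simp only [Prod.mk.injEq]
      exact ⟨hj, by omega, by omega⟩


theorem pd3 (a b c : Idx l × ℤ × ℤ) (p : V l) :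
    pderiv a (pderiv b (pderiv c p)) = pderiv b (pderiv c (pderiv a p)) := by
  rw [pdc a b, pdc a c]

theorem pd4 (a b c d : Idx l × ℤ × ℤ) (p : V l) :
    pderiv a (pderiv b (pderiv c (pderiv d p)))
      = pderiv c (pderiv d (pderiv a (pderiv b p))) := by
  rw [pdc b c (pderiv d p), pdc a c, pdc b d p, pdc a d (pderiv b p)]

theorem sum_comm4 {M : Type*} [AddCommMonoid M] {α β γ δ : Type*}
    (s : Finset α) (t : Finset β) (u : Finset γ) (v : Finset δ) (f : α → β → γ → δ → M) :
    (∑ a ∈ s, ∑ b ∈ t, ∑ c ∈ u, ∑ d ∈ v, f a b c d)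
      = ∑ c ∈ u, ∑ d ∈ v, ∑ a ∈ s, ∑ b ∈ t, f a b c d := by
  calc (∑ a ∈ s, ∑ b ∈ t, ∑ c ∈ u, ∑ d ∈ v, f a b c d)
      = ∑ a ∈ s, ∑ c ∈ u, ∑ b ∈ t, ∑ d ∈ v, f a b c d :=
        Finset.sum_congr rfl fun a _ => Finset.sum_comm
    _ = ∑ c ∈ u, ∑ a ∈ s, ∑ b ∈ t, ∑ d ∈ v, f a b c d := Finset.sum_comm
    _ = ∑ c ∈ u, ∑ a ∈ s, ∑ d ∈ v, ∑ b ∈ t, f a b c d :=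
        Finset.sum_congr rfl fun c _ => Finset.sum_congr rfl fun a _ => Finset.sum_comm
    _ = ∑ c ∈ u, ∑ d ∈ v, ∑ a ∈ s, ∑ b ∈ t, f a b c d :=
        Finset.sum_congr rfl fun c _ => Finset.sum_comm

noncomputable def Qp (q : ℂ) (i : Idx l) (m1 n1 m2 n2 : ℤ) (p : V l) : V l :=
  ∑ k : Idx l, ∑ mm' ∈ pv p ×ˢ pv p, ∑ j : Idx l, ∑ mm ∈ pv p ×ˢ pv p,
    w q m2 n2 mm' • (w q m1 n1 mm •
      (X (j, m1 + mm.1.1 + mm.2.1, n1 + mm.1.2 + mm.2.2) *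
        (X (k, m2 + mm'.1.1 + mm'.2.1, n2 + mm'.1.2 + mm'.2.2) *
          pderiv (j, mm.1) (pderiv (i, mm.2) (pderiv (k, mm'.1) (pderiv (i, mm'.2) p))))))

noncomputable def GA (q : ℂ) (i : Idx l) (m1 n1 m2 n2 : ℤ) (p : V l) : V l :=
  ∑ mm' ∈ pv p ×ˢ pv p, ∑ j : Idx l, ∑ ab ∈ pv p,
    w q m2 n2 mm' • (w q m1 n1 (ab, (m2 + mm'.1.1 + mm'.2.1, n2 + mm'.1.2 + mm'.2.2)) •
      (X (j, m1 + ab.1 + (m2 + mm'.1.1 + mm'.2.1), n1 + ab.2 + (n2 + mm'.1.2 + mm'.2.2)) *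
        pderiv (j, ab) (pderiv (i, mm'.1) (pderiv (i, mm'.2) p))))

noncomputable def GB (q : ℂ) (i : Idx l) (m1 n1 m2 n2 : ℤ) (p : V l) : V l :=
  ∑ k : Idx l, ∑ mm' ∈ pv p ×ˢ pv p, ∑ cd ∈ pv p,
    w q m2 n2 mm' • (w q m1 n1 ((m2 + mm'.1.1 + mm'.2.1, n2 + mm'.1.2 + mm'.2.2), cd) •
      (X (k, m1 + (m2 + mm'.1.1 + mm'.2.1) + cd.1, n1 + (n2 + mm'.1.2 + mm'.2.2) + cd.2) *
        pderiv (i, cd) (pderiv (k, mm'.1) (pderiv (i, mm'.2) p))))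

theorem SS_SS (q : ℂ) (i : Idx l) (m1 n1 m2 n2 : ℤ) (p : V l) :
    SS q i m1 n1 (SS q i m2 n2 p)
      = Qp q i m1 n1 m2 n2 p + (GA q i m1 n1 m2 n2 p + GB q i m1 n1 m2 n2 p) := by
  classical
  rw [SS_eq_sum q i m2 n2 p subset_rfl, SS_sum]
  have step : ∀ k : Idx l,
      SS q i m1 n1 (∑ mm' ∈ pv p ×ˢ pv p, trm q i m2 n2 p k mm')
        = ∑ mm' ∈ pv p ×ˢ pv p,
            ((∑ j : Idx l, ∑ mm ∈ pv p ×ˢ pv p, w q m2 n2 mm' • (w q m1 n1 mm •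
              (X (j, m1 + mm.1.1 + mm.2.1, n1 + mm.1.2 + mm.2.2) *
                (X (k, m2 + mm'.1.1 + mm'.2.1, n2 + mm'.1.2 + mm'.2.2) *
                  pderiv (j, mm.1) (pderiv (i, mm.2) (pderiv (k, mm'.1) (pderiv (i, mm'.2) p)))))))
            + ((if k = i then ∑ j : Idx l, ∑ ab ∈ pv p,
                  w q m2 n2 mm' • (w q m1 n1 (ab, (m2 + mm'.1.1 + mm'.2.1, n2 + mm'.1.2 + mm'.2.2)) •
                    (X (j, m1 + ab.1 + (m2 + mm'.1.1 + mm'.2.1), n1 + ab.2 + (n2 + mm'.1.2 + mm'.2.2)) *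
                      pderiv (j, ab) (pderiv (i, mm'.1) (pderiv (i, mm'.2) p)))) else 0)
              + ∑ cd ∈ pv p,
                  w q m2 n2 mm' • (w q m1 n1 ((m2 + mm'.1.1 + mm'.2.1, n2 + mm'.1.2 + mm'.2.2), cd) •
                    (X (k, m1 + (m2 + mm'.1.1 + mm'.2.1) + cd.1, n1 + (n2 + mm'.1.2 + mm'.2.2) + cd.2) *
                      pderiv (i, cd) (pderiv (k, mm'.1) (pderiv (i, mm'.2) p)))))) := by
    intro k
    rw [SS_sum]
    refine Finset.sum_congr rfl fun mm' _ => ?_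
    rw [trm, SS_smul,
      SS_X_mul q i k m1 n1 (m2 + mm'.1.1 + mm'.2.1, n2 + mm'.1.2 + mm'.2.2)
        (pderiv (k, mm'.1) (pderiv (i, mm'.2) p)) ((pv_pd _ _).trans (pv_pd _ _)),
      smul_add, smul_add, Finset.smul_sum, smul_ite, smul_zero, Finset.smul_sum]
    refine congrArg₂ (· + ·) ?_ (congrArg₂ (· + ·) ?_ ?_)
    · exact Finset.sum_congr rfl fun j _ => Finset.smul_sum
    · rcases eq_or_ne k i with rfl | hk
      · rw [if_pos rfl, if_pos rfl]
        exact Finset.sum_congr rfl fun j _ => Finset.smul_sum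
      · rw [if_neg hk, if_neg hk]
    · rw [Finset.smul_sum]
  conv_lhs => enter [2, k]; rw [step k]
  simp only [Finset.sum_add_distrib]
  refine congrArg₂ (· + ·) ?_ (congrArg₂ (· + ·) ?_ ?_)
  · rfl
  · -- collapse the k-sum for the middle block
    rw [GA, Finset.sum_eq_single_of_mem i (Finset.mem_univ i)
      (fun k _ hk => Finset.sum_eq_zero fun mm' _ => by rw [if_neg hk])]
    exact Finset.sum_congr rfl fun mm' _ => by rw [if_pos rfl]
  · rfl

theorem Qp_symm (q : ℂ) (i : Idx l) (m1 n1 m2 n2 : ℤ) (p : V l) :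
    Qp q i m1 n1 m2 n2 p = Qp q i m2 n2 m1 n1 p := by
  rw [Qp, Qp, sum_comm4]
  refine Finset.sum_congr rfl fun a _ => Finset.sum_congr rfl fun b _ =>
    Finset.sum_congr rfl fun c _ => Finset.sum_congr rfl fun d _ => ?_
  rw [smul_smul, smul_smul, mul_comm (w q m2 n2 d) (w q m1 n1 b),
    pd4 (a, b.1) (i, b.2) (c, d.1) (i, d.2) p, mul_left_comm]

theorem GA_eq_GB (q : ℂ) (hq : q ≠ 0) (i : Idx l) (m1 n1 m2 n2 : ℤ) (p : V l) :
    GA q i m1 n1 m2 n2 p = GB q i m2 n2 m1 n1 p := by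
  rw [GA, GB]
  rw [Finset.sum_product]
  rw [Finset.sum_congr rfl fun k (_ : k ∈ Finset.univ) => (Finset.sum_product
    (s := pv p) (t := pv p) (f := fun mm' => ∑ cd ∈ pv p,
      w q m1 n1 mm' • (w q m2 n2 ((m1 + mm'.1.1 + mm'.2.1, n1 + mm'.1.2 + mm'.2.2), cd) •
        (X (k, m2 + (m1 + mm'.1.1 + mm'.2.1) + cd.1, n2 + (n1 + mm'.1.2 + mm'.2.2) + cd.2) *
          pderiv (i, cd) (pderiv (k, mm'.1) (pderiv (i, mm'.2) p))))))]
  rw [sum_comm4]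
  refine Finset.sum_congr rfl fun j _ => Finset.sum_congr rfl fun x _ =>
    Finset.sum_congr rfl fun y _ => Finset.sum_congr rfl fun z _ => ?_
  rw [smul_smul, smul_smul, w, w, w, w, ← zpow_add₀ hq, ← zpow_add₀ hq,
    pd3 (i, z) (j, x) (i, y) p]
  refine congrArg₂ (· • ·) (congrArg (q ^ ·) (by ring)) (congrArg₂ (· * ·) ?_ rfl)
  refine congrArg X ?_
  simp only [Prod.mk.injEq]
  refine ⟨trivial, by ring, by ring⟩

theorem SS_comm (q : ℂ) (hq : q ≠ 0) (i : Idx l) (m1 n1 m2 n2 : ℤ) (p : V l) :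
    SS q i m1 n1 (SS q i m2 n2 p) = SS q i m2 n2 (SS q i m1 n1 p) := by
  rw [SS_SS, SS_SS, Qp_symm, GA_eq_GB q hq i m1 n1 m2 n2 p, ← GA_eq_GB q hq i m2 n2 m1 n1 p]
  abel


theorem main_comm (q μ : ℂ) (hq : q ≠ 0) (i : Idx l) (m1 n1 m2 n2 : ℤ) (p : V l) :
    eUp l q μ i m1 n1 (eUp l q μ i m2 n2 p) - eUp l q μ i m2 n2 (eUp l q μ i m1 n1 p) = 0 := by
  simp only [eUp_eq, Derivation.map_sub, Derivation.map_smul, SS_sub, SS_smul, smul_sub]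
  have hdd := pdc ((i, (-m1, -n1)) : Idx l × ℤ × ℤ) ((i, (-m2, -n2)) : Idx l × ℤ × ℤ) p
  have hss := SS_comm q hq i m1 n1 m2 n2 p
  have hdc := Dcomm q hq i m1 n1 m2 n2 p
  rw [smul_sub, smul_sub] at hdc
  linear_combination (norm := module)
    (q ^ (-(m1 * n1)) * (μ * (q ^ (-(m2 * n2)) * μ))) • hdd + hss - μ • hdc

end S7

theorem stmt7 (l : ℕ) (hl : 2 ≤ l) (q μ : ℂ) (hq : q ≠ 0)
    (i : Idx l) (m1 n1 m2 n2 : ℤ) :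
    oComm (eUp l q μ i m1 n1) (eUp l q μ i m2 n2) = fun _ => 0 := by
  funext p
  show eUp l q μ i m1 n1 (eUp l q μ i m2 n2 p) - eUp l q μ i m2 n2 (eUp l q μ i m1 n1 p) = 0
  exact S7.main_comm q μ hq i m1 n1 m2 n2 p
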